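/- If n is an odd positive integer and q is a prime dividing P_n, then q ≡ 1 (mod 4). -/
import Mathlib


/-- The Pell sequence: `P 0 = 0`, `P 1 = 1`, `P (n+2) = 2 * P (n+1) + P n`. -/
def pell : ℕ → ℕ
  | 0 => 0
  | 1 => 1
  | n + 2 => 2 * pell (n + 1) + pell n

lemma pell_add (m n : ℕ) :
    pell (m + n + 1) = pell (m + 1) * pell (n + 1) + pell m * pell n := by
  induction m using Nat.twoStepInduction with
  | zero => simp [pell]
  | one =>
    rw [show 1+n+1 = n+2 by omega, show pell (n+2) = 2*pell (n+1)+pell n from rfl,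
      show pell 2 = 2 from rfl, show pell 1 = 1 from rfl]
    ring
  | more m ih1 ih2 =>
    have h1 : m + 2 + n + 1 = (m + n + 1) + 2 := by ring
    have h2 : m + 1 + n + 1 = (m + n + 1) + 1 := by ring
    rw [h1, show pell ((m+n+1)+2) = 2 * pell ((m+n+1)+1) + pell (m+n+1) from rfl,
      ← h2, ih2, ih1,
      show pell (m+3) = 2 * pell (m+2) + pell (m+1) from rfl,
      show pell (m+2) = 2 * pell (m+1) + pell m from rfl]
    ring

lemma pell_coprime (n : ℕ) : Nat.Coprime (pell n) (pell (n + 1)) := by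
  induction n with
  | zero => simp [pell]
  | succ n ih =>
    rw [Nat.coprime_comm, show pell (n+2) = 2 * pell (n+1) + pell n from rfl,
      show 2 * pell (n+1) + pell n = pell n + pell (n+1) * 2 by ring,
      Nat.coprime_add_mul_left_left]
    exact ih

lemma pell_mod_two (n : ℕ) : pell n % 2 = n % 2 := by
  induction n using Nat.twoStepInduction with
  | zero => rfl
  | one => rfl
  | more n ih1 ih2 =>
    rw [show pell (n+2) = 2 * pell (n+1) + pell n from rfl]
    omega

/-- If `n` is an odd positive integer and `q` is a prime dividing `P_n`, then
`q ≡ 1 (mod 4)`. -/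
theorem prime_dvd_pell_odd_index (n q : ℕ) (hn : Odd n) (hq : q.Prime)
    (hdvd : q ∣ pell n) : q % 4 = 1 := by
  obtain ⟨k, rfl⟩ := hn
  haveI : Fact q.Prime := ⟨hq⟩
  have hsum : pell (2 * k + 1) = pell (k + 1) * pell (k + 1) + pell k * pell k := by
    rw [show 2 * k + 1 = k + k + 1 by ring, pell_add]
  -- q is odd
  have hq2 : q ≠ 2 := by
    rintro rfl
    have := pell_mod_two (2 * k + 1)
    omega
  have hqodd : q % 2 = 1 := Nat.odd_iff.mp (hq.odd_of_ne_two hq2)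
  -- work in ZMod q
  have hz : ((pell (k+1) : ZMod q))^2 + (pell k : ZMod q)^2 = 0 := by
    have h0 : ((pell (2*k+1) : ℕ) : ZMod q) = 0 :=
      (ZMod.natCast_eq_zero_iff _ _).mpr hdvd
    rw [hsum] at h0
    push_cast at h0
    linear_combination h0
  have ha : (pell k : ZMod q) ≠ 0 := by
    intro h
    have hb : (pell (k+1) : ZMod q) = 0 := by
      have : ((pell (k+1) : ZMod q))^2 = 0 := by rw [← hz, h]; ring
      exact pow_eq_zero_iff (by norm_num) |>.mp this
    have d1 : q ∣ pell k := (ZMod.natCast_eq_zero_iff _ _).mp h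
    have d2 : q ∣ pell (k+1) := (ZMod.natCast_eq_zero_iff _ _).mp hb
    have := Nat.dvd_gcd d1 d2
    rw [pell_coprime k] at this
    exact hq.one_lt.ne' (Nat.dvd_one.mp this)
  have hsq : IsSquare (-1 : ZMod q) := by
    refine ⟨(pell (k+1) : ZMod q) * (pell k : ZMod q)⁻¹, ?_⟩
    have hinv : (pell k : ZMod q) * (pell k : ZMod q)⁻¹ = 1 := mul_inv_cancel₀ ha
    have hb2 : ((pell (k+1) : ZMod q))^2 = -(pell k : ZMod q)^2 := by
      linear_combination hz
    linear_combination (-(((pell k : ZMod q))⁻¹)^2) * hz +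
      ((pell k : ZMod q) * ((pell k : ZMod q))⁻¹ + 1) * hinv
  have h3 : q % 4 ≠ 3 := (ZMod.exists_sq_eq_neg_one_iff).mp hsq
  omega
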